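/- Let f : ℝ^d → ℝ be μ-strongly convex (μ > 0), let g = (g_1, …, g_q) : ℝ^d → ℝ^q have each component convex with all subgradients of each g_l bounded in norm by L_g, let A ∈ ℝ^{p×d}, b, v ∈ ℝ^p and z ∈ ℝ^q, and define φ(u, y) = min_x [f(x) + ⟨u, A x − b − v⟩ + ⟨y, g(x) − z⟩] for (u, y) ∈ ℝ^p × ℝ^q_{≥0}. Then at every point ζ = (u, y) with y strictly componentwise positive, φ is differentiable with gradient ∇φ(ζ) = (A x(ζ) − b − v, g(x(ζ)) − z), where x(ζ) is the unique minimizer of x ↦ f(x) + ⟨u, A x − b − v⟩ + ⟨y, g(x) − z⟩. -/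

import Mathlib

open RealInnerProductSpace Finset

/-- A vector `s` is a subgradient of `g` at `x` if `g y ≥ g x + ⟪s, y - x⟫` for all `y`. -/
def IsSubgradientAt {E : Type*} [NormedAddCommGroup E] [InnerProductSpace ℝ E]
    (g : E → ℝ) (s : E) (x : E) : Prop :=
  ∀ y, g y ≥ g x + ⟪s, y - x⟫

/-- The Lagrangian `x ↦ f x + ⟪u, A x − b − v⟫ + ⟪y, g x − z⟫` at `ζ = (u, y)`. -/
noncomputable def lagrangian {d p q : ℕ}
    (f : EuclideanSpace ℝ (Fin d) → ℝ)
    (g : EuclideanSpace ℝ (Fin d) → EuclideanSpace ℝ (Fin q))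
    (A : EuclideanSpace ℝ (Fin d) →L[ℝ] EuclideanSpace ℝ (Fin p))
    (b v : EuclideanSpace ℝ (Fin p)) (z : EuclideanSpace ℝ (Fin q))
    (ζ : EuclideanSpace ℝ (Fin p) × EuclideanSpace ℝ (Fin q))
    (x : EuclideanSpace ℝ (Fin d)) : ℝ :=
  f x + ⟪ζ.1, A x - b - v⟫ + ⟪ζ.2, g x - z⟫


set_option maxHeartbeats 1000000

open Filter Topology

lemma exists_subgradient {n : ℕ} (h : EuclideanSpace ℝ (Fin n) → ℝ)
    (hh : ConvexOn ℝ Set.univ h) (x : EuclideanSpace ℝ (Fin n)) :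
    ∃ s, IsSubgradientAt h s x := by
  have hcont : Continuous h := by
    have := hh.continuousOn isOpen_univ
    rwa [continuousOn_univ] at this
  set S : Set (EuclideanSpace ℝ (Fin n) × ℝ) := {pr | h pr.1 < pr.2} with hS
  have hopen : IsOpen S := isOpen_lt (hcont.comp continuous_fst) continuous_snd
  have hconv : Convex ℝ S := by
    intro pr hpr qr hqr a c ha hc hac
    simp only [hS, Set.mem_setOf_eq] at *
    calc h (a • pr.1 + c • qr.1) ≤ a * h pr.1 + c * h qr.1 :=
          hh.2 (Set.mem_univ _) (Set.mem_univ _) ha hc hac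
      _ < a * pr.2 + c * qr.2 := by
          rcases eq_or_lt_of_le ha with rfl | ha'
          · simp only [zero_mul, zero_add]
            have : c = 1 := by linarith
            subst this; simpa using hqr
          · have h1 : a * h pr.1 < a * pr.2 := (mul_lt_mul_iff_right₀ ha').2 hpr
            have h2 : c * h qr.1 ≤ c * qr.2 := mul_le_mul_of_nonneg_left hqr.le hc
            linarith
  have hnot : (x, h x) ∉ S := by simp [hS]
  obtain ⟨φ, hφ⟩ := geometric_hahn_banach_open_point hconv hopen hnot
  set c : ℝ := φ (0, 1) with hcdef
  have hc : c < 0 := by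
    have h1 : ((x, h x + 1) : EuclideanSpace ℝ (Fin n) × ℝ) ∈ S := by simp [hS]
    have := hφ _ h1
    have heq : ((x, h x + 1) : EuclideanSpace ℝ (Fin n) × ℝ) = (x, h x) + (0, 1) := by simp
    rw [heq, map_add] at this
    linarith
  have hc0 : c ≠ 0 := ne_of_lt hc
  have key : ∀ w, φ (w, h w) ≤ φ (x, h x) := by
    intro w
    refine le_of_forall_pos_le_add fun ε hε => ?_
    have hε' : 0 < ε / (-c) := div_pos hε (by linarith)
    have hmem : ((w, h w + ε / (-c)) : EuclideanSpace ℝ (Fin n) × ℝ) ∈ S := by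
      simp only [hS, Set.mem_setOf_eq]; linarith
    have hlt := hφ _ hmem
    have heq : ((w, h w + ε / (-c)) : EuclideanSpace ℝ (Fin n) × ℝ)
        = (w, h w) + (ε / (-c)) • ((0 : EuclideanSpace ℝ (Fin n)), (1:ℝ)) := by
      simp [Prod.ext_iff]
    rw [heq, map_add, map_smul] at hlt
    have hlt' : φ (w, h w) + (ε / (-c)) * c < φ (x, h x) := hlt
    have hcalc : ε / (-c) * c = -ε := by
      field_simp
    linarith [hcalc ▸ hlt']
  set ℓ : EuclideanSpace ℝ (Fin n) →L[ℝ] ℝ :=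
    φ.comp (ContinuousLinearMap.inl ℝ (EuclideanSpace ℝ (Fin n)) ℝ) with hldef
  have hsplit : ∀ (w : EuclideanSpace ℝ (Fin n)) (t : ℝ), φ (w, t) = ℓ w + t * c := by
    intro w t
    have heq : ((w, t) : EuclideanSpace ℝ (Fin n) × ℝ)
        = (w, 0) + t • ((0 : EuclideanSpace ℝ (Fin n)), (1:ℝ)) := by simp [Prod.ext_iff]
    rw [heq, map_add, map_smul]
    simp [hldef]
    exact Or.inl hcdef.symm
  refine ⟨(InnerProductSpace.toDual ℝ (EuclideanSpace ℝ (Fin n))).symm ((-c)⁻¹ • ℓ),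
    fun w => ?_⟩
  rw [ge_iff_le, InnerProductSpace.toDual_symm_apply]
  have hkey := key w
  rw [hsplit w (h w), hsplit x (h x)] at hkey
  have h2 : ℓ w - ℓ x ≤ (h w - h x) * (-c) := by nlinarith
  have h3 : ((-c)⁻¹ • ℓ) (w - x) = (ℓ w - ℓ x) * (-c)⁻¹ := by
    simp [map_sub]; ring
  rw [h3]
  have hpos : (0:ℝ) < -c := by linarith
  have h4 : (ℓ w - ℓ x) * (-c)⁻¹ ≤ h w - h x :=
    calc (ℓ w - ℓ x) * (-c)⁻¹ ≤ ((h w - h x) * -c) * (-c)⁻¹ :=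
          mul_le_mul_of_nonneg_right h2 (inv_nonneg.2 hpos.le)
      _ = h w - h x := by field_simp
  linarith

lemma growth_of_min {n : ℕ} {μ : ℝ} (F : EuclideanSpace ℝ (Fin n) → ℝ)
    (hF : ConvexOn ℝ Set.univ (fun w => F w - μ / 2 * ‖w‖ ^ 2))
    (xs : EuclideanSpace ℝ (Fin n)) (hmin : ∀ w, F xs ≤ F w)
    (w : EuclideanSpace ℝ (Fin n)) :
    F xs + μ / 2 * ‖w - xs‖ ^ 2 ≤ F w := by
  have hS : StrongConvexOn Set.univ μ F := strongConvexOn_iff_convex.2 hF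
  have key : ∀ t ∈ Set.Ioc (0:ℝ) 1, F xs + μ / 2 * ((1 - t) * ‖w - xs‖ ^ 2) ≤ F w := by
    intro t ht
    obtain ⟨ht0, ht1⟩ := ht
    have h2 := hS.2 (Set.mem_univ w) (Set.mem_univ xs) ht0.le (by linarith : (0:ℝ) ≤ 1 - t)
      (by ring)
    simp only [smul_eq_mul] at h2
    have h3 : F xs ≤ F (t • w + (1 - t) • xs) := hmin _
    have h4 : t * (F xs + μ / 2 * ((1 - t) * ‖w - xs‖ ^ 2) - F w) ≤ 0 := by nlinarith
    have h5 : F xs + μ / 2 * ((1 - t) * ‖w - xs‖ ^ 2) - F w ≤ 0 :=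
      le_of_mul_le_mul_left (by linarith : t * (F xs + μ / 2 * ((1 - t) * ‖w - xs‖ ^ 2) - F w) ≤ t * 0) ht0
    linarith
  have htend : Tendsto (fun t : ℝ => F xs + μ / 2 * ((1 - t) * ‖w - xs‖ ^ 2)) (𝓝[>] (0:ℝ))
      (𝓝 (F xs + μ / 2 * ((1 - 0) * ‖w - xs‖ ^ 2))) := by
    apply Tendsto.mono_left _ nhdsWithin_le_nhds
    exact (Continuous.tendsto (by continuity) 0)
  have hle : F xs + μ / 2 * ((1 - 0) * ‖w - xs‖ ^ 2) ≤ F w := by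
    refine le_of_tendsto htend ?_
    filter_upwards [Ioc_mem_nhdsGT_of_mem (Set.mem_Ico.2 ⟨le_refl 0, one_pos⟩)] with t ht
    exact key t ht
  simpa using hle

lemma euc_inner_eq {q : ℕ} (y w : EuclideanSpace ℝ (Fin q)) :
    ⟪y, w⟫ = ∑ l, y l * w l := by
  simp [PiLp.inner_apply, RCLike.inner_apply, mul_comm]

lemma lagr_diff {d p q : ℕ}
    (f : EuclideanSpace ℝ (Fin d) → ℝ)
    (g : EuclideanSpace ℝ (Fin d) → EuclideanSpace ℝ (Fin q))
    (A : EuclideanSpace ℝ (Fin d) →L[ℝ] EuclideanSpace ℝ (Fin p))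
    (b v : EuclideanSpace ℝ (Fin p)) (z : EuclideanSpace ℝ (Fin q))
    (ζ ζ' : EuclideanSpace ℝ (Fin p) × EuclideanSpace ℝ (Fin q))
    (w : EuclideanSpace ℝ (Fin d)) :
    lagrangian f g A b v z ζ' w - lagrangian f g A b v z ζ w
      = ⟪ζ'.1 - ζ.1, A w - b - v⟫ + ⟪ζ'.2 - ζ.2, g w - z⟫ := by
  simp only [lagrangian, inner_sub_left]
  ring

lemma lagr_strongconv {d p q : ℕ} {μ : ℝ}
    (f : EuclideanSpace ℝ (Fin d) → ℝ)
    (hf : ConvexOn ℝ Set.univ (fun x => f x - μ / 2 * ‖x‖ ^ 2))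
    (g : EuclideanSpace ℝ (Fin d) → EuclideanSpace ℝ (Fin q))
    (hg : ∀ l, ConvexOn ℝ Set.univ (fun x => g x l))
    (A : EuclideanSpace ℝ (Fin d) →L[ℝ] EuclideanSpace ℝ (Fin p))
    (b v : EuclideanSpace ℝ (Fin p)) (z : EuclideanSpace ℝ (Fin q))
    (ζ : EuclideanSpace ℝ (Fin p) × EuclideanSpace ℝ (Fin q))
    (hζ : ∀ l, 0 ≤ ζ.2 l) :
    ConvexOn ℝ Set.univ (fun w => lagrangian f g A b v z ζ w - μ / 2 * ‖w‖ ^ 2) := by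
  constructor
  · exact convex_univ
  intro w _ w' _ a c ha hc hac
  simp only [smul_eq_mul, lagrangian]
  have h1 := hf.2 (Set.mem_univ w) (Set.mem_univ w') ha hc hac
  simp only [smul_eq_mul] at h1
  have h2 : ⟪ζ.1, A (a • w + c • w') - b - v⟫
      = a * ⟪ζ.1, A w - b - v⟫ + c * ⟪ζ.1, A w' - b - v⟫ := by
    rw [map_add, map_smul, map_smul]
    simp only [inner_sub_right, inner_add_right, inner_smul_right]
    linear_combination ((inner ℝ ζ.1 b : ℝ) + inner ℝ ζ.1 v) * hac
  have h3 : ⟪ζ.2, g (a • w + c • w') - z⟫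
      ≤ a * ⟪ζ.2, g w - z⟫ + c * ⟪ζ.2, g w' - z⟫ := by
    rw [euc_inner_eq, euc_inner_eq, euc_inner_eq, Finset.mul_sum, Finset.mul_sum,
      ← Finset.sum_add_distrib]
    refine Finset.sum_le_sum fun l _ => ?_
    simp only [PiLp.sub_apply]
    have hgl := (hg l).2 (Set.mem_univ w) (Set.mem_univ w') ha hc hac
    simp only [smul_eq_mul] at hgl
    have hmul := mul_le_mul_of_nonneg_left hgl (hζ l)
    have hz : (a + c) * (ζ.2 l * z l) = ζ.2 l * z l := by rw [hac]; ring
    nlinarith [hmul, hz]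
  linarith [h1, h2.le, h3]

lemma g_norm_bound {d q : ℕ} {Lg : ℝ}
    (g : EuclideanSpace ℝ (Fin d) → EuclideanSpace ℝ (Fin q))
    (hg : ∀ l, ConvexOn ℝ Set.univ (fun x => g x l))
    (hsub : ∀ (l : Fin q) (x s : EuclideanSpace ℝ (Fin d)),
      IsSubgradientAt (fun w => g w l) s x → ‖s‖ ≤ Lg)
    (w w' : EuclideanSpace ℝ (Fin d)) :
    ‖g w - g w'‖ ≤ Real.sqrt q * max Lg 0 * ‖w - w'‖ := by
  have hcomp : ∀ l (x x' : EuclideanSpace ℝ (Fin d)),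
      g x l - g x' l ≤ max Lg 0 * ‖x - x'‖ := by
    intro l x x'
    obtain ⟨s, hs⟩ := exists_subgradient (fun v => g v l) (hg l) x
    have h1 := hs x'
    have h2 : ‖s‖ ≤ max Lg 0 := le_max_of_le_left (hsub l x s hs)
    have h3 : |⟪s, x' - x⟫| ≤ ‖s‖ * ‖x' - x‖ := abs_real_inner_le_norm s (x' - x)
    rw [norm_sub_rev] at h3
    have h5 := mul_le_mul_of_nonneg_right h2 (norm_nonneg (x - x'))
    simp only [ge_iff_le] at h1
    linarith [(abs_le.1 h3).1, h5, h1]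
  have habs : ∀ l, |g w l - g w' l| ≤ max Lg 0 * ‖w - w'‖ := by
    intro l
    rw [abs_le]
    constructor
    · have := hcomp l w' w
      rw [norm_sub_rev] at this
      linarith
    · exact hcomp l w w'
  have hM : 0 ≤ max Lg 0 * ‖w - w'‖ := mul_nonneg (le_max_right _ _) (norm_nonneg _)
  rw [EuclideanSpace.norm_eq]
  have hsum : ∑ l, ‖(g w - g w') l‖ ^ 2 ≤ (q : ℝ) * (max Lg 0 * ‖w - w'‖) ^ 2 := by
    calc ∑ l, ‖(g w - g w') l‖ ^ 2 ≤ ∑ _l : Fin q, (max Lg 0 * ‖w - w'‖) ^ 2 := by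
          refine Finset.sum_le_sum fun l _ => ?_
          have : ‖(g w - g w') l‖ = |g w l - g w' l| := by
            simp [PiLp.sub_apply, Real.norm_eq_abs]
          rw [this]
          exact pow_le_pow_left₀ (abs_nonneg _) (habs l) 2
      _ = (q : ℝ) * (max Lg 0 * ‖w - w'‖) ^ 2 := by
          simp [Finset.sum_const, nsmul_eq_mul]
  calc Real.sqrt (∑ l, ‖(g w - g w') l‖ ^ 2)
      ≤ Real.sqrt ((q : ℝ) * (max Lg 0 * ‖w - w'‖) ^ 2) := Real.sqrt_le_sqrt hsum
    _ = Real.sqrt q * (max Lg 0 * ‖w - w'‖) := by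
        rw [Real.sqrt_mul (Nat.cast_nonneg q), Real.sqrt_sq hM]
    _ = Real.sqrt q * max Lg 0 * ‖w - w'‖ := by ring

lemma arith_quad_bound {μ n K δ R e : ℝ} (hμ : 0 < μ) (hn0 : 0 ≤ n) (hK0 : 0 ≤ K)
    (hδ0 : 0 ≤ δ) (hup : e ≤ 0) (hlow : μ / 2 * δ ^ 2 + R ≤ e) (hR : |R| ≤ n * K * δ) :
    |e| ≤ 2 * K ^ 2 / μ * n ^ 2 := by
  obtain ⟨hR1, hR2⟩ := abs_le.1 hR
  have h1 : μ / 2 * δ ^ 2 ≤ n * K * δ := by linarith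
  have hδn : δ ≤ 2 * K / μ * n := by
    rcases eq_or_lt_of_le hδ0 with h | h
    · rw [← h]; positivity
    · have h3 : μ / 2 * δ ≤ n * K := by
        have := le_of_mul_le_mul_right (by nlinarith : μ / 2 * δ * δ ≤ n * K * δ) h
        linarith
      rw [div_mul_eq_mul_div, le_div_iff₀ hμ]
      nlinarith
  have hC : n * K * δ ≤ 2 * K ^ 2 / μ * n ^ 2 := by
    have h4 : n * K * δ ≤ n * K * (2 * K / μ * n) :=
      mul_le_mul_of_nonneg_left hδn (by positivity)
    calc n * K * δ ≤ n * K * (2 * K / μ * n) := h4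
      _ = 2 * K ^ 2 / μ * n ^ 2 := by field_simp
  rw [abs_le]
  constructor
  · nlinarith [sq_nonneg δ]
  · calc e ≤ 0 := hup
      _ ≤ 2 * K ^ 2 / μ * n ^ 2 := by positivity


/-- The dual function `φ(u,y) = min_x [f x + ⟪u, A x − b − v⟫ + ⟪y, g x − z⟫]`
is differentiable at every `ζ = (u, y)` with `y > 0` componentwise, with gradient
`∇φ(ζ) = (A x(ζ) − b − v, g(x(ζ)) − z)`, where `x(ζ)` is the unique minimizer of the
Lagrangian. -/
theorem dual_function_differentiable_at_interior
    (d p q : ℕ) (μ Lg : ℝ) (hμ : 0 < μ)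
    (f : EuclideanSpace ℝ (Fin d) → ℝ)
    (hf : ConvexOn ℝ Set.univ (fun x => f x - μ / 2 * ‖x‖ ^ 2))
    (g : EuclideanSpace ℝ (Fin d) → EuclideanSpace ℝ (Fin q))
    (hg : ∀ l, ConvexOn ℝ Set.univ (fun x => g x l))
    (hsub : ∀ (l : Fin q) (x s : EuclideanSpace ℝ (Fin d)),
      IsSubgradientAt (fun w => g w l) s x → ‖s‖ ≤ Lg)
    (A : EuclideanSpace ℝ (Fin d) →L[ℝ] EuclideanSpace ℝ (Fin p))
    (b v : EuclideanSpace ℝ (Fin p)) (z : EuclideanSpace ℝ (Fin q))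
    (D : Set (EuclideanSpace ℝ (Fin p) × EuclideanSpace ℝ (Fin q)))
    (hD : D = {ζ | ∀ l, 0 ≤ ζ.2 l})
    -- `xm` selects, for each admissible `ζ`, the (unique) minimizer of the Lagrangian
    (xm : (EuclideanSpace ℝ (Fin p) × EuclideanSpace ℝ (Fin q)) → EuclideanSpace ℝ (Fin d))
    (hxm : ∀ ζ ∈ D, ∀ w, lagrangian f g A b v z ζ (xm ζ) ≤ lagrangian f g A b v z ζ w) :
    ∀ ζ : EuclideanSpace ℝ (Fin p) × EuclideanSpace ℝ (Fin q), (∀ l, 0 < ζ.2 l) →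
      HasFDerivWithinAt (fun ζ' => lagrangian f g A b v z ζ' (xm ζ'))
        ((innerSL ℝ (A (xm ζ) - b - v)).comp
            (ContinuousLinearMap.fst ℝ (EuclideanSpace ℝ (Fin p)) (EuclideanSpace ℝ (Fin q)))
          + (innerSL ℝ (g (xm ζ) - z)).comp
            (ContinuousLinearMap.snd ℝ (EuclideanSpace ℝ (Fin p)) (EuclideanSpace ℝ (Fin q))))
        D ζ := by
  intro ζ hpos
  have hζD : ζ ∈ D := by rw [hD]; exact fun l => (hpos l).le
  set K : ℝ := ‖A‖ + Real.sqrt q * max Lg 0 with hKdef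
  have hK0 : 0 ≤ K :=
    add_nonneg (norm_nonneg _) (mul_nonneg (Real.sqrt_nonneg _) (le_max_right _ _))
  set C : ℝ := 2 * K ^ 2 / μ with hCdef
  have hC0 : 0 ≤ C := by positivity
  -- growth property of minimizers
  have hgrow : ∀ ζ' ∈ D, ∀ w, lagrangian f g A b v z ζ' (xm ζ') + μ / 2 * ‖w - xm ζ'‖ ^ 2
      ≤ lagrangian f g A b v z ζ' w := by
    intro ζ' hζ' w
    have hζ'' : ∀ l, 0 ≤ ζ'.2 l := by rw [hD] at hζ'; exact hζ'
    exact growth_of_min _ (lagr_strongconv f hf g hg A b v z ζ' hζ'') (xm ζ') (hxm ζ' hζ') w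
  -- the main quadratic error bound
  have key : ∀ ζ' ∈ D,
      |lagrangian f g A b v z ζ' (xm ζ') - lagrangian f g A b v z ζ (xm ζ)
        - (⟪A (xm ζ) - b - v, ζ'.1 - ζ.1⟫ + ⟪g (xm ζ) - z, ζ'.2 - ζ.2⟫)|
      ≤ C * ‖ζ' - ζ‖ ^ 2 := by
    intro ζ' hζ'
    set x : EuclideanSpace ℝ (Fin d) := xm ζ with hx
    set x' : EuclideanSpace ℝ (Fin d) := xm ζ' with hx'
    set δ : ℝ := ‖x' - x‖ with hδ
    set n : ℝ := ‖ζ' - ζ‖ with hn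
    have hδ0 : 0 ≤ δ := norm_nonneg _
    have hn0 : 0 ≤ n := norm_nonneg _
    have hTval : ⟪A x - b - v, ζ'.1 - ζ.1⟫ + ⟪g x - z, ζ'.2 - ζ.2⟫
        = ⟪ζ'.1 - ζ.1, A x - b - v⟫ + ⟪ζ'.2 - ζ.2, g x - z⟫ := by
      rw [real_inner_comm (A x - b - v), real_inner_comm (g x - z)]
    -- upper bound on the error
    have hup : lagrangian f g A b v z ζ' x' - lagrangian f g A b v z ζ x
        - (⟪A x - b - v, ζ'.1 - ζ.1⟫ + ⟪g x - z, ζ'.2 - ζ.2⟫) ≤ 0 := by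
      have h1 : lagrangian f g A b v z ζ' x' ≤ lagrangian f g A b v z ζ' x := hxm ζ' hζ' x
      have h2 := lagr_diff f g A b v z ζ ζ' x
      rw [hTval]
      linarith
    -- norm bounds on the correction term
    have hΔ1 : ‖ζ'.1 - ζ.1‖ ≤ n := by
      have := norm_fst_le (ζ' - ζ)
      simpa using this
    have hΔ2 : ‖ζ'.2 - ζ.2‖ ≤ n := by
      have := norm_snd_le (ζ' - ζ)
      simpa using this
    have hR1 : |⟪ζ'.1 - ζ.1, A x' - A x⟫| ≤ n * (‖A‖ * δ) := by
      calc |⟪ζ'.1 - ζ.1, A x' - A x⟫| ≤ ‖ζ'.1 - ζ.1‖ * ‖A x' - A x‖ :=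
            abs_real_inner_le_norm _ _
        _ ≤ n * (‖A‖ * δ) := by
            have h1 : ‖A x' - A x‖ ≤ ‖A‖ * δ := by
              rw [← map_sub]; exact A.le_opNorm _
            exact mul_le_mul hΔ1 h1 (norm_nonneg _) hn0
    have hR2 : |⟪ζ'.2 - ζ.2, g x' - g x⟫| ≤ n * (Real.sqrt q * max Lg 0 * δ) := by
      calc |⟪ζ'.2 - ζ.2, g x' - g x⟫| ≤ ‖ζ'.2 - ζ.2‖ * ‖g x' - g x‖ :=
            abs_real_inner_le_norm _ _
        _ ≤ n * (Real.sqrt q * max Lg 0 * δ) :=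
            mul_le_mul hΔ2 (g_norm_bound g hg hsub x' x) (norm_nonneg _) hn0
    have hRbound : |⟪ζ'.1 - ζ.1, A x' - A x⟫ + ⟪ζ'.2 - ζ.2, g x' - g x⟫| ≤ n * K * δ := by
      calc |⟪ζ'.1 - ζ.1, A x' - A x⟫ + ⟪ζ'.2 - ζ.2, g x' - g x⟫|
          ≤ |⟪ζ'.1 - ζ.1, A x' - A x⟫| + |⟪ζ'.2 - ζ.2, g x' - g x⟫| := abs_add_le _ _
        _ ≤ n * (‖A‖ * δ) + n * (Real.sqrt q * max Lg 0 * δ) := add_le_add hR1 hR2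
        _ = n * K * δ := by rw [hKdef]; ring
    -- lower bound on the error
    have hlow : μ / 2 * δ ^ 2 + (⟪ζ'.1 - ζ.1, A x' - A x⟫ + ⟪ζ'.2 - ζ.2, g x' - g x⟫)
        ≤ lagrangian f g A b v z ζ' x' - lagrangian f g A b v z ζ x
          - (⟪A x - b - v, ζ'.1 - ζ.1⟫ + ⟪g x - z, ζ'.2 - ζ.2⟫) := by
      have h1 := lagr_diff f g A b v z ζ ζ' x'
      have h2 := hgrow ζ hζD x'
      rw [hTval]
      have e1 : ⟪ζ'.1 - ζ.1, A x' - b - v⟫ - ⟪ζ'.1 - ζ.1, A x - b - v⟫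
          = ⟪ζ'.1 - ζ.1, A x' - A x⟫ := by
        rw [← inner_sub_right]
        congr 1
        abel
      have e2 : ⟪ζ'.2 - ζ.2, g x' - z⟫ - ⟪ζ'.2 - ζ.2, g x - z⟫
          = ⟪ζ'.2 - ζ.2, g x' - g x⟫ := by
        rw [← inner_sub_right]
        congr 1
        abel
      linarith
    have harith := arith_quad_bound hμ hn0 hK0 hδ0 hup hlow hRbound
    rw [hCdef]
    exact harith
  -- assemble the little-o statement
  rw [hasFDerivWithinAt_iff_isLittleO]
  have happ : ∀ ζ' : EuclideanSpace ℝ (Fin p) × EuclideanSpace ℝ (Fin q),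
      ((innerSL ℝ (A (xm ζ) - b - v)).comp
            (ContinuousLinearMap.fst ℝ (EuclideanSpace ℝ (Fin p)) (EuclideanSpace ℝ (Fin q)))
          + (innerSL ℝ (g (xm ζ) - z)).comp
            (ContinuousLinearMap.snd ℝ (EuclideanSpace ℝ (Fin p)) (EuclideanSpace ℝ (Fin q))))
        (ζ' - ζ)
      = ⟪A (xm ζ) - b - v, ζ'.1 - ζ.1⟫ + ⟪g (xm ζ) - z, ζ'.2 - ζ.2⟫ := by
    intro ζ'
    simp [ContinuousLinearMap.add_apply, ContinuousLinearMap.comp_apply, sub_mul,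
      Finset.sum_sub_distrib]
    simp only [inner_sub_left]
  have hBigO : (fun ζ' => lagrangian f g A b v z ζ' (xm ζ') - lagrangian f g A b v z ζ (xm ζ)
      - ((innerSL ℝ (A (xm ζ) - b - v)).comp
            (ContinuousLinearMap.fst ℝ (EuclideanSpace ℝ (Fin p)) (EuclideanSpace ℝ (Fin q)))
          + (innerSL ℝ (g (xm ζ) - z)).comp
            (ContinuousLinearMap.snd ℝ (EuclideanSpace ℝ (Fin p)) (EuclideanSpace ℝ (Fin q))))
        (ζ' - ζ)) =O[nhdsWithin ζ D] (fun ζ' => ‖ζ' - ζ‖ ^ 2) := by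
    rw [Asymptotics.isBigO_iff]
    refine ⟨C, ?_⟩
    filter_upwards [self_mem_nhdsWithin] with ζ' hζ'
    rw [happ ζ']
    rw [Real.norm_eq_abs, Real.norm_eq_abs, abs_of_nonneg (by positivity : (0:ℝ) ≤ ‖ζ' - ζ‖ ^ 2)]
    exact key ζ' hζ'
  have hlito : (fun ζ' : EuclideanSpace ℝ (Fin p) × EuclideanSpace ℝ (Fin q) => ‖ζ' - ζ‖ ^ 2)
      =o[nhdsWithin ζ D] (fun ζ' => ζ' - ζ) := by
    rw [Asymptotics.isLittleO_iff]
    intro c hc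
    have htend : Tendsto (fun ζ' : EuclideanSpace ℝ (Fin p) × EuclideanSpace ℝ (Fin q) =>
        ‖ζ' - ζ‖) (nhdsWithin ζ D) (nhds 0) := by
      have h1 : Tendsto (fun ζ' : EuclideanSpace ℝ (Fin p) × EuclideanSpace ℝ (Fin q) =>
          ‖ζ' - ζ‖) (nhds ζ) (nhds ‖ζ - ζ‖) :=
        ((continuous_id.sub continuous_const).norm).tendsto ζ
      simp only [sub_self, norm_zero] at h1
      exact h1.mono_left nhdsWithin_le_nhds
    filter_upwards [htend.eventually (eventually_le_nhds hc)] with ζ' hζ'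
    rw [Real.norm_eq_abs, abs_of_nonneg (by positivity : (0:ℝ) ≤ ‖ζ' - ζ‖ ^ 2), sq]
    exact mul_le_mul_of_nonneg_right hζ' (norm_nonneg _)
  exact hBigO.trans_isLittleO hlito
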